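/- arXiv:0805.0633 — 12 statements merged into one kernel-verified Lean document; each statement's English description precedes it below -/
import Mathlib

section
/- Let X be a complex Banach space, H : ℝ → (X →L[ℂ] X) a continuous family of bounded operators, and U : ℝ → (X →L[ℂ] X) a differentiable family of bounded operators satisfying i·U'(t) = H(t) ∘ U(t) for all t, with U(0) = I. Let V : ℝ → (X →L[ℂ] X) be continuous with U(t) ∘ V(t) = V(t) ∘ U(t) = I for all t. Let F : ℝ → X → X be continuous (jointly), let ψ₀ ∈ X, and let ψ : ℝ → X be a continuous function satisfying the integral equation ψ(t) = U(t)ψ₀ − i·∫₀ᵗ U(t)(V(s)(F(s, ψ(s)))) ds for all t. Then ψ is differentiable, ψ(0) = ψ₀, and i·ψ'(t) − H(t)ψ(t) = F(t, ψ(t)) for all t. -/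
open MeasureTheory intervalIntegral

/-- Duhamel's principle: a continuous solution of the integral equation
`ψ(t) = U(t)ψ₀ − i·∫₀ᵗ U(t)(V(s)(F(s, ψ(s)))) ds` is differentiable, attains the
initial value `ψ₀` at `t = 0`, and solves the nonlinear Schrödinger equation
`i·ψ'(t) − H(t)ψ(t) = F(t, ψ(t))`. -/
theorem duhamel_principle {X : Type*} [NormedAddCommGroup X] [NormedSpace ℂ X]
    [CompleteSpace X]
    (H : ℝ → X →L[ℂ] X) (hH : Continuous H)
    (U U' : ℝ → X →L[ℂ] X)
    (hU : ∀ t : ℝ, HasDerivAt U (U' t) t)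
    (hHU : ∀ t : ℝ, Complex.I • U' t = (H t).comp (U t))
    (hU0 : U 0 = ContinuousLinearMap.id ℂ X)
    (V : ℝ → X →L[ℂ] X) (hV : Continuous V)
    (hUV : ∀ t : ℝ, (U t).comp (V t) = ContinuousLinearMap.id ℂ X)
    (hVU : ∀ t : ℝ, (V t).comp (U t) = ContinuousLinearMap.id ℂ X)
    (F : ℝ → X → X) (hF : Continuous fun p : ℝ × X => F p.1 p.2)
    (ψ₀ : X) (ψ : ℝ → X) (hψ : Continuous ψ)
    (heq : ∀ t : ℝ,
      ψ t = U t ψ₀ - Complex.I • ∫ s in (0:ℝ)..t, U t (V s (F s (ψ s)))) :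
    (∀ t : ℝ, DifferentiableAt ℝ ψ t) ∧ ψ 0 = ψ₀ ∧
      ∀ t : ℝ, Complex.I • deriv ψ t - H t (ψ t) = F t (ψ t) := by
  -- the integrand without U t
  set f : ℝ → X := fun s => V s (F s (ψ s)) with hf_def
  have hf : Continuous f := by
    apply hV.clm_apply
    exact hF.comp (continuous_id.prodMk hψ)
  -- g t = ψ₀ - I • ∫₀ᵗ f
  set g : ℝ → X := fun t => ψ₀ - Complex.I • ∫ s in (0:ℝ)..t, f s with hg_def
  have hψg : ∀ t, ψ t = U t (g t) := by
    intro t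
    have hint : IntervalIntegrable f volume 0 t := hf.intervalIntegrable 0 t
    have hcomm : ∫ s in (0:ℝ)..t, U t (f s) = U t (∫ s in (0:ℝ)..t, f s) :=
      (U t).intervalIntegral_comp_comm hint
    rw [heq t, hg_def]
    rw [map_sub, ContinuousLinearMap.map_smul, hcomm]
  have hg' : ∀ t, HasDerivAt g (-(Complex.I • f t)) t := by
    intro t
    have hF1 : HasDerivAt (fun u => ∫ s in (0:ℝ)..u, f s) (f t) t :=
      integral_hasDerivAt_right (hf.intervalIntegrable 0 t)
        (hf.stronglyMeasurableAtFilter _ _) hf.continuousAt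
    simpa using (hF1.const_smul Complex.I).const_sub ψ₀
  -- restrict scalars to ℝ to apply the product rule
  set R : (X →L[ℂ] X) →L[ℝ] (X →L[ℝ] X) :=
    ContinuousLinearMap.restrictScalarsL ℂ X X ℝ ℝ with hR_def
  have hderiv : ∀ t, HasDerivAt ψ (U' t (g t) + U t (-(Complex.I • f t))) t := by
    intro t
    have hUr : HasDerivAt (fun u => R (U u)) (R (U' t)) t :=
      R.hasFDerivAt.comp_hasDerivAt t (hU t)
    have := hUr.clm_apply (hg' t)
    have heqfun : (fun u => (R (U u)) (g u)) = fun u => U u (g u) := rfl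
    rw [heqfun] at this
    have : HasDerivAt (fun u => U u (g u)) (U' t (g t) + U t (-(Complex.I • f t))) t := this
    exact this.congr_of_eventuallyEq (Filter.Eventually.of_forall fun u => (hψg u))
  refine ⟨fun t => (hderiv t).differentiableAt, ?_, ?_⟩
  · rw [heq 0, hU0]
    simp
  · intro t
    rw [(hderiv t).deriv]
    have h1 : Complex.I • U' t (g t) = H t (ψ t) := by
      have := congrArg (fun (L : X →L[ℂ] X) => L (g t)) (hHU t)
      simp only [ContinuousLinearMap.smul_apply, ContinuousLinearMap.comp_apply] at this
      rw [this, ← hψg t]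
    have h2 : Complex.I • U t (-(Complex.I • f t)) = F t (ψ t) := by
      have : Complex.I • (-(Complex.I • f t)) = f t := by
        rw [smul_neg, smul_smul, Complex.I_mul_I]
        simp
      rw [← ContinuousLinearMap.map_smul, this, hf_def]
      have := congrArg (fun (L : X →L[ℂ] X) => L (F t (ψ t))) (hUV t)
      simpa using this
    rw [smul_add, h1, h2]
    abel
end

section
/- Let a, b, c, d, f, g : ℝ → ℝ be given coefficient functions and let α, β, γ, δ, ε, κ : ℝ → ℝ be differentiable on an open interval J. Define S(x, y, t) = α(t)x² + β(t)xy + γ(t)y² + δ(t)x + ε(t)y + κ(t). Then S satisfies the Hamilton–Jacobi type equation ∂S/∂t = −a(t)(∂S/∂x)² − b(t)x² + f(t)x + (g(t) − c(t)x)·∂S/∂x for all real x, y and all t ∈ J if and only if on J the following system of ordinary differential equations holds: α' + b + 2cα + 4aα² = 0; β' + (c + 4aα)β = 0; γ' + aβ² = 0; δ' + (c + 4aα)δ = f + 2αg; ε' = (g − 2aδ)β; κ' = gδ − aδ². -/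
lemma poly2_coeffs (A B C D E K : ℝ)
    (h : ∀ x y : ℝ, A * x ^ 2 + B * (x * y) + C * y ^ 2 + D * x + E * y + K = 0) :
    A = 0 ∧ B = 0 ∧ C = 0 ∧ D = 0 ∧ E = 0 ∧ K = 0 := by
  have h00 := h 0 0
  have h10 := h 1 0
  have hm10 := h (-1) 0
  have h01 := h 0 1
  have h0m1 := h 0 (-1)
  have h11 := h 1 1
  norm_num at h00 h10 hm10 h01 h0m1 h11
  refine ⟨by linarith, by linarith, by linarith, by linarith, by linarith, by linarith⟩

/-- The quadratic phase `S(x,y,t) = α t x² + β t xy + γ t y² + δ t x + ε t y + κ t`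
satisfies the Hamilton–Jacobi type equation
`∂S/∂t = −a(∂S/∂x)² − b x² + f x + (g − c x)·∂S/∂x` on an open interval `J`
if and only if the coefficients satisfy the corresponding system of ODEs on `J`. -/
theorem quadratic_phase_iff_ode_system
    (a b c d f g : ℝ → ℝ) (J : Set ℝ) (hJopen : IsOpen J) (hJconn : J.OrdConnected)
    (α β γ δ ε κ : ℝ → ℝ)
    (hα : ∀ t ∈ J, DifferentiableAt ℝ α t) (hβ : ∀ t ∈ J, DifferentiableAt ℝ β t)
    (hγ : ∀ t ∈ J, DifferentiableAt ℝ γ t) (hδ : ∀ t ∈ J, DifferentiableAt ℝ δ t)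
    (hε : ∀ t ∈ J, DifferentiableAt ℝ ε t) (hκ : ∀ t ∈ J, DifferentiableAt ℝ κ t)
    (S : ℝ → ℝ → ℝ → ℝ)
    (hS : S = fun x y t =>
      α t * x ^ 2 + β t * (x * y) + γ t * y ^ 2 + δ t * x + ε t * y + κ t) :
    (∀ t ∈ J, ∀ x y : ℝ,
        deriv (fun t' => S x y t') t =
          -a t * (deriv (fun x' => S x' y t) x) ^ 2 - b t * x ^ 2 + f t * x +
            (g t - c t * x) * deriv (fun x' => S x' y t) x) ↔
      (∀ t ∈ J,
        deriv α t + b t + 2 * c t * α t + 4 * a t * α t ^ 2 = 0 ∧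
        deriv β t + (c t + 4 * a t * α t) * β t = 0 ∧
        deriv γ t + a t * β t ^ 2 = 0 ∧
        deriv δ t + (c t + 4 * a t * α t) * δ t = f t + 2 * α t * g t ∧
        deriv ε t = (g t - 2 * a t * δ t) * β t ∧
        deriv κ t = g t * δ t - a t * δ t ^ 2) := by
  subst hS
  have hdt : ∀ t ∈ J, ∀ x y : ℝ,
      deriv (fun t' => α t' * x ^ 2 + β t' * (x * y) + γ t' * y ^ 2 + δ t' * x +
        ε t' * y + κ t') t
      = deriv α t * x ^ 2 + deriv β t * (x * y) + deriv γ t * y ^ 2 + deriv δ t * x +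
        deriv ε t * y + deriv κ t := by
    intro t ht x y
    exact ((((((hα t ht).hasDerivAt.mul_const (x ^ 2)).add
      ((hβ t ht).hasDerivAt.mul_const (x * y))).add
      ((hγ t ht).hasDerivAt.mul_const (y ^ 2))).add
      ((hδ t ht).hasDerivAt.mul_const x)).add
      ((hε t ht).hasDerivAt.mul_const y)).add (hκ t ht).hasDerivAt |>.deriv
  have hdx : ∀ t x y : ℝ,
      deriv (fun x' => α t * x' ^ 2 + β t * (x' * y) + γ t * y ^ 2 + δ t * x' +
        ε t * y + κ t) x
      = 2 * α t * x + β t * y + δ t := by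
    intro t x y
    have h1 : HasDerivAt (fun x' : ℝ => α t * x' ^ 2) (α t * (2 * x)) x := by
      simpa using ((hasDerivAt_pow 2 x).const_mul (α t))
    have h2 : HasDerivAt (fun x' : ℝ => β t * (x' * y)) (β t * (1 * y)) x :=
      ((hasDerivAt_id x).mul_const y).const_mul (β t)
    have h3 : HasDerivAt (fun x' : ℝ => δ t * x') (δ t * 1) x :=
      (hasDerivAt_id x).const_mul (δ t)
    have := ((((h1.add h2).add (hasDerivAt_const x (γ t * y ^ 2))).add h3).add
      (hasDerivAt_const x (ε t * y))).add (hasDerivAt_const x (κ t))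
    have h' : HasDerivAt (fun x' => α t * x' ^ 2 + β t * (x' * y) + γ t * y ^ 2 +
        δ t * x' + ε t * y + κ t) (2 * α t * x + β t * y + δ t) x := by
      exact this.congr_deriv (by ring)
    exact h'.deriv
  constructor
  · intro h t ht
    have hP : ∀ x y : ℝ,
        (deriv α t + b t + 2 * c t * α t + 4 * a t * α t ^ 2) * x ^ 2 +
        (deriv β t + (c t + 4 * a t * α t) * β t) * (x * y) +
        (deriv γ t + a t * β t ^ 2) * y ^ 2 +
        (deriv δ t + (c t + 4 * a t * α t) * δ t - (f t + 2 * α t * g t)) * x +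
        (deriv ε t - (g t - 2 * a t * δ t) * β t) * y +
        (deriv κ t - (g t * δ t - a t * δ t ^ 2)) = 0 := by
      intro x y
      have key := h t ht x y
      rw [hdt t ht x y, hdx t x y] at key
      linear_combination key
    obtain ⟨e1, e2, e3, e4, e5, e6⟩ := poly2_coeffs _ _ _ _ _ _ hP
    exact ⟨e1, e2, e3, by linarith, by linarith, by linarith⟩
  · intro h t ht x y
    obtain ⟨e1, e2, e3, e4, e5, e6⟩ := h t ht
    rw [hdt t ht x y, hdx t x y]
    linear_combination x ^ 2 * e1 + (x * y) * e2 + y ^ 2 * e3 + x * e4 + y * e5 + e6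
end

section
/- Let a, b, c, d : ℝ → ℝ with a, d differentiable and a(t) ≠ 0 on an open interval J. Suppose α : J → ℝ is differentiable and solves the Riccati equation α' + b + 2cα + 4aα² = 0 on J, and suppose μ : J → ℝ is differentiable with μ(t) ≠ 0 and μ'(t)/(2μ(t)) = 2α(t)a(t) + d(t) on J. Then μ is twice differentiable and satisfies the characteristic equation μ'' − τ(t)μ' + 4σ(t)μ = 0 on J, where τ = a'/a − 2c + 4d and σ = ab − cd + d² + (d·a')/(2a) − d'/2. -/
/-- If `α` solves the Riccati equation `α' + b + 2cα + 4aα² = 0` and `μ` satisfies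
`μ'/(2μ) = 2αa + d` on an open interval `J`, then `μ` is twice differentiable and
satisfies the characteristic equation `μ'' − τ μ' + 4σ μ = 0`, where
`τ = a'/a − 2c + 4d` and `σ = ab − cd + d² + d·a'/(2a) − d'/2`. -/
theorem riccati_to_characteristic
    (a b c d : ℝ → ℝ) (J : Set ℝ) (hJopen : IsOpen J) (hJconn : J.OrdConnected)
    (ha : ∀ t ∈ J, DifferentiableAt ℝ a t) (hd : ∀ t ∈ J, DifferentiableAt ℝ d t)
    (ha0 : ∀ t ∈ J, a t ≠ 0)
    (α : ℝ → ℝ) (hα : ∀ t ∈ J, DifferentiableAt ℝ α t)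
    (hric : ∀ t ∈ J, deriv α t + b t + 2 * c t * α t + 4 * a t * α t ^ 2 = 0)
    (μ : ℝ → ℝ) (hμ : ∀ t ∈ J, DifferentiableAt ℝ μ t) (hμ0 : ∀ t ∈ J, μ t ≠ 0)
    (hμα : ∀ t ∈ J, deriv μ t / (2 * μ t) = 2 * α t * a t + d t) :
    ∀ t ∈ J, DifferentiableAt ℝ (deriv μ) t ∧
      deriv (deriv μ) t - (deriv a t / a t - 2 * c t + 4 * d t) * deriv μ t +
        4 * (a t * b t - c t * d t + d t ^ 2 + d t * deriv a t / (2 * a t) -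
          deriv d t / 2) * μ t = 0 := by
  intro t ht
  set f : ℝ → ℝ := fun s => (2 * α s * a s + d s) * (2 * μ s) with hf
  have hEq : ∀ s ∈ J, deriv μ s = f s := by
    intro s hs
    have h := hμα s hs
    have h2 : (2 : ℝ) * μ s ≠ 0 := by
      have := hμ0 s hs; positivity
    rw [div_eq_iff h2] at h
    simpa [hf] using h
  have hEv : deriv μ =ᶠ[nhds t] f :=
    Filter.eventually_iff_exists_mem.mpr ⟨J, hJopen.mem_nhds ht, hEq⟩
  -- derivative of f
  have h1 : HasDerivAt (fun s => 2 * α s * a s + d s)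
      (2 * deriv α t * a t + 2 * α t * deriv a t + deriv d t) t := by
    have hh := ((((hα t ht).hasDerivAt).const_mul 2).mul ((ha t ht).hasDerivAt)).add
      ((hd t ht).hasDerivAt)
    exact hh
  have h2 : HasDerivAt (fun s => 2 * μ s) (2 * deriv μ t) t :=
    ((hμ t ht).hasDerivAt).const_mul 2
  have hF : HasDerivAt f
      ((2 * deriv α t * a t + 2 * α t * deriv a t + deriv d t) * (2 * μ t) +
        (2 * α t * a t + d t) * (2 * deriv μ t)) t := h1.mul h2
  have hdiff : DifferentiableAt ℝ (deriv μ) t :=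
    hF.differentiableAt.congr_of_eventuallyEq hEv
  refine ⟨hdiff, ?_⟩
  have hderiv2 : deriv (deriv μ) t =
      (2 * deriv α t * a t + 2 * α t * deriv a t + deriv d t) * (2 * μ t) +
        (2 * α t * a t + d t) * (2 * deriv μ t) := by
    rw [hEv.deriv_eq]; exact hF.deriv
  have hμ' : deriv μ t = (2 * α t * a t + d t) * (2 * μ t) := hEq t ht
  have hα' : deriv α t = -(b t + 2 * c t * α t + 4 * a t * α t ^ 2) := by
    have := hric t ht; linarith
  rw [hderiv2, hμ', hα']
  have ha0' := ha0 t ht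
  field_simp
  ring
end

section
/- Let a, b, c, d : ℝ → ℝ with a, d differentiable and a(t) ≠ 0 on an open interval J, and let μ : J → ℝ be twice differentiable with μ(t) ≠ 0 on J, satisfying the characteristic equation μ'' − τ(t)μ' + 4σ(t)μ = 0, where τ = a'/a − 2c + 4d and σ = ab − cd + d² + (d·a')/(2a) − d'/2. Then α(t) := μ'(t)/(4a(t)μ(t)) − d(t)/(2a(t)) is differentiable and solves the Riccati equation α' + b + 2cα + 4aα² = 0 on J. -/
/-- If `μ` is a nonvanishing twice differentiable solution of the characteristic
equation `μ'' − τ μ' + 4σ μ = 0` on an open interval `J`, with `τ = a'/a − 2c + 4d`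
and `σ = ab − cd + d² + d·a'/(2a) − d'/2`, then `α := μ'/(4aμ) − d/(2a)` is
differentiable and solves the Riccati equation `α' + b + 2cα + 4aα² = 0` on `J`. -/
theorem characteristic_to_riccati
    (a b c d : ℝ → ℝ) (J : Set ℝ) (hJopen : IsOpen J) (hJconn : J.OrdConnected)
    (ha : ∀ t ∈ J, DifferentiableAt ℝ a t) (hd : ∀ t ∈ J, DifferentiableAt ℝ d t)
    (ha0 : ∀ t ∈ J, a t ≠ 0)
    (μ : ℝ → ℝ)
    (hμ1 : ∀ t ∈ J, DifferentiableAt ℝ μ t)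
    (hμ2 : ∀ t ∈ J, DifferentiableAt ℝ (deriv μ) t)
    (hμ0 : ∀ t ∈ J, μ t ≠ 0)
    (hchar : ∀ t ∈ J,
      deriv (deriv μ) t - (deriv a t / a t - 2 * c t + 4 * d t) * deriv μ t +
        4 * (a t * b t - c t * d t + d t ^ 2 + d t * deriv a t / (2 * a t) -
          deriv d t / 2) * μ t = 0)
    (α : ℝ → ℝ)
    (hα : α = fun t => deriv μ t / (4 * a t * μ t) - d t / (2 * a t)) :
    ∀ t ∈ J, DifferentiableAt ℝ α t ∧
      deriv α t + b t + 2 * c t * α t + 4 * a t * α t ^ 2 = 0 := by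
  intro t ht
  have haD := ha t ht
  have hdD := hd t ht
  have hμD := hμ1 t ht
  have hμ'D := hμ2 t ht
  have ha0t := ha0 t ht
  have hμ0t := hμ0 t ht
  have hden1 : (4 : ℝ) * a t * μ t ≠ 0 := by
    simp [ha0t, hμ0t]
  have hden2 : (2 : ℝ) * a t ≠ 0 := by simp [ha0t]
  have h1 : HasDerivAt (deriv μ) (deriv (deriv μ) t) t := hμ'D.hasDerivAt
  have h2 : HasDerivAt a (deriv a t) t := haD.hasDerivAt
  have h3 : HasDerivAt μ (deriv μ t) t := hμD.hasDerivAt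
  have h4 : HasDerivAt d (deriv d t) t := hdD.hasDerivAt
  have hden1' : HasDerivAt (fun t => 4 * a t * μ t)
      (4 * deriv a t * μ t + 4 * a t * deriv μ t) t := by
    have := ((h2.const_mul (4:ℝ)).mul h3)
    exact this
  have hden2' : HasDerivAt (fun t => 2 * a t) (2 * deriv a t) t := h2.const_mul 2
  have hα' : HasDerivAt α
      ((deriv (deriv μ) t * (4 * a t * μ t) -
        deriv μ t * (4 * deriv a t * μ t + 4 * a t * deriv μ t)) / (4 * a t * μ t) ^ 2 -
       (deriv d t * (2 * a t) - d t * (2 * deriv a t)) / (2 * a t) ^ 2) t := by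
    rw [hα]
    exact (h1.div hden1' hden1).sub (h4.div hden2' hden2)
  refine ⟨hα'.differentiableAt, ?_⟩
  rw [hα'.deriv, hα]
  simp only
  have hchar' := hchar t ht
  have hμ'' : deriv (deriv μ) t = (deriv a t / a t - 2 * c t + 4 * d t) * deriv μ t -
      4 * (a t * b t - c t * d t + d t ^ 2 + d t * deriv a t / (2 * a t) -
        deriv d t / 2) * μ t := by linarith
  rw [hμ'']
  field_simp
  ring
end

section
/- Let a, c, d : ℝ → ℝ be continuous with a(t) ≠ 0, and let μ be differentiable with μ(t) ≠ 0 on an interval J containing 0. Set α(t) = μ'(t)/(4a(t)μ(t)) − d(t)/(2a(t)) and define β(t) = −(1/μ(t))·exp(−∫₀ᵗ (c(τ) − 2d(τ)) dτ). Then β is differentiable on J and satisfies β' + (c + 4aα)β = 0. -/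
open MeasureTheory intervalIntegral

/-- With `α = μ'/(4aμ) − d/(2a)`, the function
`β(t) = −(1/μ(t))·exp(−∫₀ᵗ (c − 2d))` is differentiable and satisfies
`β' + (c + 4aα)β = 0` on an interval `J` containing `0`. -/
theorem beta_coefficient_ode
    (a c d : ℝ → ℝ) (ha : Continuous a) (hc : Continuous c) (hd : Continuous d)
    (ha0 : ∀ t : ℝ, a t ≠ 0)
    (J : Set ℝ) (hJopen : IsOpen J) (hJconn : J.OrdConnected) (hJ0 : (0:ℝ) ∈ J)
    (μ : ℝ → ℝ) (hμ : ∀ t ∈ J, DifferentiableAt ℝ μ t) (hμ0 : ∀ t ∈ J, μ t ≠ 0)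
    (α : ℝ → ℝ)
    (hα : α = fun t => deriv μ t / (4 * a t * μ t) - d t / (2 * a t))
    (β : ℝ → ℝ)
    (hβ : β = fun t => -(1 / μ t) * Real.exp (-∫ τ in (0:ℝ)..t, (c τ - 2 * d τ))) :
    ∀ t ∈ J, DifferentiableAt ℝ β t ∧
      deriv β t + (c t + 4 * a t * α t) * β t = 0 := by
  intro t ht
  have hcont : Continuous (fun τ => c τ - 2 * d τ) := hc.sub (continuous_const.mul hd)
  have hF : HasDerivAt (fun x => ∫ τ in (0:ℝ)..x, (c τ - 2 * d τ)) (c t - 2 * d t) t :=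
    intervalIntegral.integral_hasDerivAt_right (hcont.intervalIntegrable _ _)
      (hcont.stronglyMeasurableAtFilter _ _) hcont.continuousAt
  have hE : HasDerivAt (fun x => Real.exp (-∫ τ in (0:ℝ)..x, (c τ - 2 * d τ)))
      (Real.exp (-∫ τ in (0:ℝ)..t, (c τ - 2 * d τ)) * -(c t - 2 * d t)) t :=
    (hF.neg).exp
  have hμ' : HasDerivAt μ (deriv μ t) t := (hμ t ht).hasDerivAt
  have hinv : HasDerivAt (fun x => -(1 / μ x)) (deriv μ t / μ t ^ 2) t := by
    have : HasDerivAt (fun x => -(μ x)⁻¹) (-(-deriv μ t / μ t ^ 2)) t := (hμ'.inv (hμ0 t ht)).neg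
    simpa [one_div, div_eq_mul_inv, neg_div] using this
  have hβ' : HasDerivAt β
      (deriv μ t / μ t ^ 2 * Real.exp (-∫ τ in (0:ℝ)..t, (c τ - 2 * d τ)) +
        (-(1 / μ t)) * (Real.exp (-∫ τ in (0:ℝ)..t, (c τ - 2 * d τ)) * -(c t - 2 * d t))) t := by
    rw [hβ]; exact hinv.mul hE
  refine ⟨hβ'.differentiableAt, ?_⟩
  rw [hβ'.deriv, hβ, hα]
  have hμt := hμ0 t ht
  have hat := ha0 t
  field_simp
  ring
end

section
/- Let a, b, c, d : ℝ → ℝ with a, d differentiable, a(t) ≠ 0, and c, d continuous, and let μ be twice differentiable on an interval J ⊂ (0, ∞) with μ(t) ≠ 0 and μ'(t) ≠ 0, satisfying the characteristic equation μ'' − τμ' + 4σμ = 0 where τ = a'/a − 2c + 4d and σ = ab − cd + d² + (d·a')/(2a) − d'/2. Set E(t) = exp(−∫₀ᵗ (c(τ) − 2d(τ)) dτ), β(t) = −E(t)/μ(t), and define γ(t) = (a(t)/(μ(t)μ'(t)))·E(t)² − 4∫₀ᵗ (a(τ)σ(τ)/μ'(τ)²)·E(τ)² dτ. Then γ is differentiable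 on J and satisfies γ' + aβ² = 0. -/
open MeasureTheory intervalIntegral

/-- The coefficient `γ(t) = (a/(μμ'))E² − 4∫₀ᵗ (aσ/μ'²)E²`, with
`E(t) = exp(−∫₀ᵗ(c − 2d))` and `β = −E/μ`, is differentiable and satisfies
`γ' + aβ² = 0` on `J`, provided `μ` solves the characteristic equation. -/
theorem gamma_coefficient_ode
    (a b c d : ℝ → ℝ)
    (ha : Differentiable ℝ a) (hd : Differentiable ℝ d)
    (ha0 : ∀ t : ℝ, a t ≠ 0) (hc : Continuous c) (hdc : Continuous d)
    (J : Set ℝ) (hJopen : IsOpen J) (hJconn : J.OrdConnected) (hJ : J ⊆ Set.Ioi (0:ℝ))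
    (μ : ℝ → ℝ)
    (hμ1 : ∀ t ∈ J, DifferentiableAt ℝ μ t)
    (hμ2 : ∀ t ∈ J, DifferentiableAt ℝ (deriv μ) t)
    (hμ0 : ∀ t ∈ J, μ t ≠ 0) (hμ'0 : ∀ t ∈ J, deriv μ t ≠ 0)
    (σ : ℝ → ℝ)
    (hσ : σ = fun t => a t * b t - c t * d t + d t ^ 2 + d t * deriv a t / (2 * a t) -
      deriv d t / 2)
    (hchar : ∀ t ∈ J,
      deriv (deriv μ) t - (deriv a t / a t - 2 * c t + 4 * d t) * deriv μ t +
        4 * σ t * μ t = 0)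
    (E : ℝ → ℝ) (hE : E = fun t => Real.exp (-∫ τ in (0:ℝ)..t, (c τ - 2 * d τ)))
    (β : ℝ → ℝ) (hβ : β = fun t => -E t / μ t)
    (h : ℝ → ℝ) (hh : h = fun τ => a τ * σ τ / (deriv μ τ) ^ 2 * E τ ^ 2)
    (hInt : ∀ t ∈ J, IntervalIntegrable h volume 0 t)
    (hhc : ∀ t ∈ J, ContinuousAt h t)
    (γ : ℝ → ℝ)
    (hγ : γ = fun t => a t / (μ t * deriv μ t) * E t ^ 2 - 4 * ∫ τ in (0:ℝ)..t, h τ) :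
    ∀ t ∈ J, DifferentiableAt ℝ γ t ∧ deriv γ t + a t * β t ^ 2 = 0 := by
  intro t ht
  have hcd : Continuous (fun τ => c τ - 2 * d τ) := hc.sub (continuous_const.mul hdc)
  -- derivative of E
  have hg : HasDerivAt (fun u => ∫ τ in (0:ℝ)..u, (c τ - 2 * d τ)) (c t - 2 * d t) t :=
    integral_hasDerivAt_right (hcd.intervalIntegrable 0 t)
      (hcd.aestronglyMeasurable.stronglyMeasurableAtFilter) hcd.continuousAt
  have hE1 : HasDerivAt E (E t * -(c t - 2 * d t)) t := by
    rw [hE]; exact (hg.neg).exp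
  have hE2 : HasDerivAt (fun u => E u ^ 2)
      ((2:ℕ) * E t ^ (2-1) * (E t * -(c t - 2 * d t))) t := hE1.pow 2
  have hμden : μ t * deriv μ t ≠ 0 := mul_ne_zero (hμ0 t ht) (hμ'0 t ht)
  have hquot : HasDerivAt (fun u => a u / (μ u * deriv μ u))
      ((deriv a t * (μ t * deriv μ t) -
        a t * (deriv μ t * deriv μ t + μ t * deriv (deriv μ) t)) / (μ t * deriv μ t) ^ 2) t :=
    ((ha t).hasDerivAt).div (((hμ1 t ht).hasDerivAt).mul ((hμ2 t ht).hasDerivAt)) hμden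
  -- measurability of h near t
  have hmeas : StronglyMeasurableAtFilter h (nhds t) := by
    refine ⟨J, hJopen.mem_nhds ht, ?_⟩
    exact (ContinuousOn.aestronglyMeasurable
      (fun x hx => (hhc x hx).continuousWithinAt) hJopen.measurableSet)
  have hI : HasDerivAt (fun u => ∫ τ in (0:ℝ)..u, h τ) (h t) t :=
    integral_hasDerivAt_right (hInt t ht) hmeas (hhc t ht)
  have hγ' : HasDerivAt γ
      (((deriv a t * (μ t * deriv μ t) -
        a t * (deriv μ t * deriv μ t + μ t * deriv (deriv μ) t)) / (μ t * deriv μ t) ^ 2)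
        * E t ^ 2 +
        (a t / (μ t * deriv μ t)) * ((2:ℕ) * E t ^ (2-1) * (E t * -(c t - 2 * d t)))
        - 4 * h t) t := by
    rw [hγ]
    exact (hquot.mul hE2).sub (hI.const_mul 4)
  refine ⟨hγ'.differentiableAt, ?_⟩
  rw [hγ'.deriv, hβ, hh]
  have hM'' : deriv (deriv μ) t =
      (deriv a t / a t - 2 * c t + 4 * d t) * deriv μ t - 4 * σ t * μ t := by
    linarith [hchar t ht]
  rw [hM'']
  field_simp [ha0 t, hμ0 t ht, hμ'0 t ht]
  ring
end

section
/- Let a, c, d, f, g : ℝ → ℝ be continuous with a(t) ≠ 0, and let μ be differentiable with μ(t) ≠ 0 on an interval J. Set α(t) = μ'(t)/(4a(t)μ(t)) − d(t)/(2a(t)), E(t) = exp(−∫₀ᵗ (c(τ) − 2d(τ)) dτ), and define δ(t) = (E(t)/μ(t))·∫₀ᵗ E(τ)⁻¹·[(f(τ) − (d(τ)/a(τ))g(τ))·μ(τ) + (g(τ)/(2a(τ)))·μ'(τ)] dτ. Then δ is differentiable on J and satisfies δ' + (c + 4aα)δ = f + 2αg. -/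
open MeasureTheory intervalIntegral

/-- The coefficient `δ(t) = (E/μ)·∫₀ᵗ E⁻¹[(f − (d/a)g)μ + (g/(2a))μ']`, with
`E(t) = exp(−∫₀ᵗ(c − 2d))` and `α = μ'/(4aμ) − d/(2a)`, is differentiable and
satisfies `δ' + (c + 4aα)δ = f + 2αg` on `J`. -/
theorem delta_coefficient_ode
    (a c d f g : ℝ → ℝ)
    (ha : Continuous a) (hc : Continuous c) (hd : Continuous d)
    (hf : Continuous f) (hg : Continuous g) (ha0 : ∀ t : ℝ, a t ≠ 0)
    (J : Set ℝ) (hJopen : IsOpen J) (hJconn : J.OrdConnected)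
    (μ : ℝ → ℝ) (hμ : ∀ t ∈ J, DifferentiableAt ℝ μ t) (hμ0 : ∀ t ∈ J, μ t ≠ 0)
    (α : ℝ → ℝ)
    (hα : α = fun t => deriv μ t / (4 * a t * μ t) - d t / (2 * a t))
    (E : ℝ → ℝ) (hE : E = fun t => Real.exp (-∫ τ in (0:ℝ)..t, (c τ - 2 * d τ)))
    (h : ℝ → ℝ)
    (hh : h = fun τ =>
      (E τ)⁻¹ * ((f τ - d τ / a τ * g τ) * μ τ + g τ / (2 * a τ) * deriv μ τ))
    (hInt : ∀ t ∈ J, IntervalIntegrable h volume 0 t)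
    (hhc : ∀ t ∈ J, ContinuousAt h t)
    (δ : ℝ → ℝ) (hδ : δ = fun t => E t / μ t * ∫ τ in (0:ℝ)..t, h τ) :
    ∀ t ∈ J, DifferentiableAt ℝ δ t ∧
      deriv δ t + (c t + 4 * a t * α t) * δ t = f t + 2 * α t * g t := by
  intro t ht
  have hEpos : ∀ s : ℝ, E s ≠ 0 := by
    intro s; rw [hE]; exact (Real.exp_pos _).ne'
  have hcd : Continuous (fun τ => c τ - 2 * d τ) := hc.sub (continuous_const.mul hd)
  -- derivative of the inner integral for E
  have hG : HasDerivAt (fun s => ∫ τ in (0:ℝ)..s, (c τ - 2 * d τ)) (c t - 2 * d t) t :=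
    intervalIntegral.integral_hasDerivAt_right (hcd.intervalIntegrable _ _)
      (hcd.stronglyMeasurableAtFilter _ _) hcd.continuousAt
  have hE' : HasDerivAt E (E t * (-(c t - 2 * d t))) t := by
    rw [hE]
    simpa using (hG.neg).exp
  -- derivative of the main integral
  have hSM : StronglyMeasurableAtFilter h (nhds t) volume := by
    refine ⟨J, hJopen.mem_nhds ht, ?_⟩
    exact ContinuousOn.aestronglyMeasurable
      (fun s hs => (hhc s hs).continuousWithinAt) hJopen.measurableSet
  have hI : HasDerivAt (fun s => ∫ τ in (0:ℝ)..s, h τ) (h t) t :=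
    intervalIntegral.integral_hasDerivAt_right (hInt t ht) hSM (hhc t ht)
  have hμt : HasDerivAt μ (deriv μ t) t := (hμ t ht).hasDerivAt
  have hδ' : HasDerivAt δ
      ((E t * (-(c t - 2 * d t)) * μ t - E t * deriv μ t) / (μ t) ^ 2
        * (∫ τ in (0:ℝ)..t, h τ) + E t / μ t * h t) t := by
    rw [hδ]
    exact (hE'.div hμt (hμ0 t ht)).mul hI
  refine ⟨hδ'.differentiableAt, ?_⟩
  rw [hδ'.deriv, hδ, hα, hh]
  have hμ0t := hμ0 t ht
  have ha0t := ha0 t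
  have hE0t := hEpos t
  field_simp
  ring
end

section
/- Let a, b, c, d, f, g : ℝ → ℝ with a, d differentiable and a(t) ≠ 0, and let μ be twice differentiable on an interval J with μ(t) ≠ 0 and μ'(t) ≠ 0, satisfying the characteristic equation μ'' − τμ' + 4σμ = 0 where τ = a'/a − 2c + 4d and σ = ab − cd + d² + (d·a')/(2a) − d'/2. Set E(t) = exp(−∫₀ᵗ (c(τ) − 2d(τ)) dτ), β(t) = −E(t)/μ(t), let δ be differentiable satisfying δ' + (c + μ'/μ − 2d)δ = f + 2αg with α = μ'/(4aμ) − d/(2a), and define ε(t) = −(2a(t)/μ'(t))·δ(t)·E(t) + 8∫₀ᵗ (a(τ)σ(τ)/μ'(τ)²)·E(τ)·μ(τ)δ(τ) dτ + 2∫₀ᵗ (a(τ)/μ'(τ))·E(τ)·(f(τ) − (d(τ)/a(τ))g(τ)) dτ. Then ε is differentiable on J and satisfies ε' = (g − 2aδ)β. -/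
open MeasureTheory intervalIntegral

/-- The coefficient
`ε(t) = −(2a/μ')δE + 8∫₀ᵗ (aσ/μ'²)E·μδ + 2∫₀ᵗ (a/μ')E(f − (d/a)g)` is
differentiable and satisfies `ε' = (g − 2aδ)β` on `J`, provided `μ` solves the
characteristic equation and `δ` solves `δ' + (c + μ'/μ − 2d)δ = f + 2αg`. -/
theorem epsilon_coefficient_ode
    (a b c d f g : ℝ → ℝ)
    (ha : Differentiable ℝ a) (hd : Differentiable ℝ d)
    (ha0 : ∀ t : ℝ, a t ≠ 0) (hc : Continuous c)
    (J : Set ℝ) (hJopen : IsOpen J) (hJconn : J.OrdConnected)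
    (μ : ℝ → ℝ)
    (hμ1 : ∀ t ∈ J, DifferentiableAt ℝ μ t)
    (hμ2 : ∀ t ∈ J, DifferentiableAt ℝ (deriv μ) t)
    (hμ0 : ∀ t ∈ J, μ t ≠ 0) (hμ'0 : ∀ t ∈ J, deriv μ t ≠ 0)
    (σ : ℝ → ℝ)
    (hσ : σ = fun t => a t * b t - c t * d t + d t ^ 2 + d t * deriv a t / (2 * a t) -
      deriv d t / 2)
    (hchar : ∀ t ∈ J,
      deriv (deriv μ) t - (deriv a t / a t - 2 * c t + 4 * d t) * deriv μ t +
        4 * σ t * μ t = 0)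
    (E : ℝ → ℝ) (hE : E = fun t => Real.exp (-∫ τ in (0:ℝ)..t, (c τ - 2 * d τ)))
    (β : ℝ → ℝ) (hβ : β = fun t => -E t / μ t)
    (α : ℝ → ℝ)
    (hα : α = fun t => deriv μ t / (4 * a t * μ t) - d t / (2 * a t))
    (δ : ℝ → ℝ) (hδ1 : ∀ t ∈ J, DifferentiableAt ℝ δ t)
    (hδ2 : ∀ t ∈ J,
      deriv δ t + (c t + deriv μ t / μ t - 2 * d t) * δ t = f t + 2 * α t * g t)
    (h₁ h₂ : ℝ → ℝ)
    (hh₁ : h₁ = fun τ => a τ * σ τ / (deriv μ τ) ^ 2 * E τ * (μ τ * δ τ))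
    (hh₂ : h₂ = fun τ => a τ / deriv μ τ * E τ * (f τ - d τ / a τ * g τ))
    (hInt₁ : ∀ t ∈ J, IntervalIntegrable h₁ volume 0 t)
    (hInt₂ : ∀ t ∈ J, IntervalIntegrable h₂ volume 0 t)
    (hhc₁ : ∀ t ∈ J, ContinuousAt h₁ t) (hhc₂ : ∀ t ∈ J, ContinuousAt h₂ t)
    (ε : ℝ → ℝ)
    (hε : ε = fun t => -(2 * a t / deriv μ t) * δ t * E t +
      8 * (∫ τ in (0:ℝ)..t, h₁ τ) + 2 * ∫ τ in (0:ℝ)..t, h₂ τ) :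
    ∀ t ∈ J, DifferentiableAt ℝ ε t ∧ deriv ε t = (g t - 2 * a t * δ t) * β t := by
  intro t ht
  -- continuity of the integrand of E
  have hcd : Continuous (fun τ => c τ - 2 * d τ) := hc.sub (continuous_const.mul hd.continuous)
  -- derivative of E
  have hI : HasDerivAt (fun s => ∫ τ in (0:ℝ)..s, (c τ - 2 * d τ)) (c t - 2 * d t) t :=
    integral_hasDerivAt_right (hcd.intervalIntegrable 0 t)
      (hcd.stronglyMeasurableAtFilter volume (nhds t)) hcd.continuousAt
  have hEderiv : HasDerivAt E (-(c t - 2 * d t) * E t) t := by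
    rw [hE]
    have := hI.neg.exp
    simpa [mul_comm] using this
  -- derivative of the quotient 2a/μ'
  have hq : HasDerivAt (fun s => 2 * a s / deriv μ s)
      ((2 * deriv a t * deriv μ t - 2 * a t * deriv (deriv μ) t) / (deriv μ t) ^ 2) t :=
    HasDerivAt.div ((ha t).hasDerivAt.const_mul 2) (hμ2 t ht).hasDerivAt (hμ'0 t ht)
  have hδd : HasDerivAt δ (deriv δ t) t := (hδ1 t ht).hasDerivAt
  have hterm1 : HasDerivAt (fun s => -(2 * a s / deriv μ s) * δ s * E s)
      ((-( (2 * deriv a t * deriv μ t - 2 * a t * deriv (deriv μ) t) / (deriv μ t) ^ 2) * δ t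
        + -(2 * a t / deriv μ t) * deriv δ t) * E t
        + -(2 * a t / deriv μ t) * δ t * (-(c t - 2 * d t) * E t)) t :=
    ((hq.neg.mul hδd).mul hEderiv)
  -- derivatives of the integrals
  have hI1 : HasDerivAt (fun s => ∫ τ in (0:ℝ)..s, h₁ τ) (h₁ t) t :=
    integral_hasDerivAt_right (hInt₁ t ht)
      (ContinuousAt.stronglyMeasurableAtFilter hJopen hhc₁ t ht) (hhc₁ t ht)
  have hI2 : HasDerivAt (fun s => ∫ τ in (0:ℝ)..s, h₂ τ) (h₂ t) t :=
    integral_hasDerivAt_right (hInt₂ t ht)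
      (ContinuousAt.stronglyMeasurableAtFilter hJopen hhc₂ t ht) (hhc₂ t ht)
  have hεd : HasDerivAt ε
      ((-( (2 * deriv a t * deriv μ t - 2 * a t * deriv (deriv μ) t) / (deriv μ t) ^ 2) * δ t
        + -(2 * a t / deriv μ t) * deriv δ t) * E t
        + -(2 * a t / deriv μ t) * δ t * (-(c t - 2 * d t) * E t)
        + 8 * h₁ t + 2 * h₂ t) t := by
    rw [hε]
    exact (hterm1.add (hI1.const_mul 8)).add (hI2.const_mul 2)
  refine ⟨hεd.differentiableAt, ?_⟩
  rw [hεd.deriv]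
  -- now pure algebra
  have hμ'' : deriv (deriv μ) t =
      (deriv a t / a t - 2 * c t + 4 * d t) * deriv μ t - 4 * σ t * μ t := by
    linarith [hchar t ht]
  have hδ' : deriv δ t = f t + 2 * α t * g t - (c t + deriv μ t / μ t - 2 * d t) * δ t := by
    linarith [hδ2 t ht]
  rw [hμ'', hδ']
  simp only [hσ, hα, hh₁, hh₂, hβ]
  have h1 := ha0 t
  have h2 := hμ0 t ht
  have h3 := hμ'0 t ht
  field_simp
  ring
end

section
/- Let a, b, c, d, f, g : ℝ → ℝ with a, d differentiable and a(t) ≠ 0, and let μ be twice differentiable on an interval J with μ(t) ≠ 0 and μ'(t) ≠ 0, satisfying the characteristic equation μ'' − τμ' + 4σμ = 0 where τ = a'/a − 2c + 4d and σ = ab − cd + d² + (d·a')/(2a) − d'/2. Let δ be differentiable satisfying δ' + (c + μ'/μ − 2d)δ = f + 2αg with α = μ'/(4aμ) − d/(2a), and define κ(t) = (a(t)μ(t)/μ'(t))·δ(t)² − 4∫₀ᵗ (a(τ)σ(τ)/μ'(τ)²)·(μ(τ)δ(τ))² dτ − 2∫₀ᵗ (a(τ)/μ'(τ))·μ(τ)δ(τ)·(f(τ)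 − (d(τ)/a(τ))g(τ)) dτ. Then κ is differentiable on J and satisfies κ' = gδ − aδ². -/
open MeasureTheory intervalIntegral

/-- The coefficient
`κ(t) = (aμ/μ')δ² − 4∫₀ᵗ (aσ/μ'²)(μδ)² − 2∫₀ᵗ (a/μ')μδ(f − (d/a)g)` is
differentiable and satisfies `κ' = gδ − aδ²` on `J`, provided `μ` solves the
characteristic equation and `δ` solves `δ' + (c + μ'/μ − 2d)δ = f + 2αg`. -/
theorem kappa_coefficient_ode
    (a b c d f g : ℝ → ℝ)
    (ha : Differentiable ℝ a) (hd : Differentiable ℝ d)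
    (ha0 : ∀ t : ℝ, a t ≠ 0)
    (J : Set ℝ) (hJopen : IsOpen J) (hJconn : J.OrdConnected)
    (μ : ℝ → ℝ)
    (hμ1 : ∀ t ∈ J, DifferentiableAt ℝ μ t)
    (hμ2 : ∀ t ∈ J, DifferentiableAt ℝ (deriv μ) t)
    (hμ0 : ∀ t ∈ J, μ t ≠ 0) (hμ'0 : ∀ t ∈ J, deriv μ t ≠ 0)
    (σ : ℝ → ℝ)
    (hσ : σ = fun t => a t * b t - c t * d t + d t ^ 2 + d t * deriv a t / (2 * a t) -
      deriv d t / 2)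
    (hchar : ∀ t ∈ J,
      deriv (deriv μ) t - (deriv a t / a t - 2 * c t + 4 * d t) * deriv μ t +
        4 * σ t * μ t = 0)
    (α : ℝ → ℝ)
    (hα : α = fun t => deriv μ t / (4 * a t * μ t) - d t / (2 * a t))
    (δ : ℝ → ℝ) (hδ1 : ∀ t ∈ J, DifferentiableAt ℝ δ t)
    (hδ2 : ∀ t ∈ J,
      deriv δ t + (c t + deriv μ t / μ t - 2 * d t) * δ t = f t + 2 * α t * g t)
    (h₁ h₂ : ℝ → ℝ)
    (hh₁ : h₁ = fun τ => a τ * σ τ / (deriv μ τ) ^ 2 * (μ τ * δ τ) ^ 2)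
    (hh₂ : h₂ = fun τ => a τ / deriv μ τ * (μ τ * δ τ) * (f τ - d τ / a τ * g τ))
    (hInt₁ : ∀ t ∈ J, IntervalIntegrable h₁ volume 0 t)
    (hInt₂ : ∀ t ∈ J, IntervalIntegrable h₂ volume 0 t)
    (hhc₁ : ∀ t ∈ J, ContinuousAt h₁ t) (hhc₂ : ∀ t ∈ J, ContinuousAt h₂ t)
    (κ : ℝ → ℝ)
    (hκ : κ = fun t => a t * μ t / deriv μ t * δ t ^ 2 -
      4 * (∫ τ in (0:ℝ)..t, h₁ τ) - 2 * ∫ τ in (0:ℝ)..t, h₂ τ) :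
    ∀ t ∈ J, DifferentiableAt ℝ κ t ∧ deriv κ t = g t * δ t - a t * δ t ^ 2 := by

  intro t ht
  have hμ0t := hμ0 t ht
  have hμ'0t := hμ'0 t ht
  have ha0t := ha0 t
  have hA := (ha t).hasDerivAt
  have hM := (hμ1 t ht).hasDerivAt
  have hM' := (hμ2 t ht).hasDerivAt
  have hD := (hδ1 t ht).hasDerivAt
  have hcJ₁ : ContinuousOn h₁ J := fun x hx => (hhc₁ x hx).continuousWithinAt
  have hcJ₂ : ContinuousOn h₂ J := fun x hx => (hhc₂ x hx).continuousWithinAt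
  have hsm₁ : StronglyMeasurableAtFilter h₁ (nhds t) volume :=
    ⟨J, hJopen.mem_nhds ht, hcJ₁.aestronglyMeasurable hJopen.measurableSet⟩
  have hsm₂ : StronglyMeasurableAtFilter h₂ (nhds t) volume :=
    ⟨J, hJopen.mem_nhds ht, hcJ₂.aestronglyMeasurable hJopen.measurableSet⟩
  have hI₁ : HasDerivAt (fun u => ∫ τ in (0:ℝ)..u, h₁ τ) (h₁ t) t :=
    intervalIntegral.integral_hasDerivAt_right (hInt₁ t ht) hsm₁ (hhc₁ t ht)
  have hI₂ : HasDerivAt (fun u => ∫ τ in (0:ℝ)..u, h₂ τ) (h₂ t) t :=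
    intervalIntegral.integral_hasDerivAt_right (hInt₂ t ht) hsm₂ (hhc₂ t ht)
  have hF : HasDerivAt (fun x => a x * μ x / deriv μ x * δ x ^ 2)
      (((deriv a t * μ t + a t * deriv μ t) * deriv μ t -
          a t * μ t * deriv (deriv μ) t) / (deriv μ t) ^ 2 * δ t ^ 2 +
        a t * μ t / deriv μ t * (2 * δ t * deriv δ t)) t := by
    have h := ((hA.mul hM).div hM' hμ'0t).mul (hD.pow 2)
    refine h.congr_deriv ?_
    simp only [Pi.mul_apply, Pi.div_apply, Pi.pow_apply]
    push_cast
    ring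
  have hκ' : HasDerivAt κ
      ((((deriv a t * μ t + a t * deriv μ t) * deriv μ t -
          a t * μ t * deriv (deriv μ) t) / (deriv μ t) ^ 2 * δ t ^ 2 +
        a t * μ t / deriv μ t * (2 * δ t * deriv δ t)) - 4 * h₁ t - 2 * h₂ t) t := by
    rw [hκ]
    exact (hF.sub (hI₁.const_mul 4)).sub (hI₂.const_mul 2)
  refine ⟨hκ'.differentiableAt, ?_⟩
  rw [hκ'.deriv]
  have hD' : deriv δ t = f t + 2 * α t * g t - (c t + deriv μ t / μ t - 2 * d t) * δ t := by
    have := hδ2 t ht; linarith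
  have hM'' : deriv (deriv μ) t =
      (deriv a t / a t - 2 * c t + 4 * d t) * deriv μ t - 4 * σ t * μ t := by
    have := hchar t ht; linarith
  rw [hD', hM'', hh₁, hh₂, hα]
  simp only
  field_simp
  ring
end

section
/- Let a, b, c, d, f, g : ℝ → ℝ be given coefficient functions, let α, β, γ, δ, ε, κ : J → ℝ be differentiable on an open interval J and satisfy the system α' + b + 2cα + 4aα² = 0, β' + (c + 4aα)β = 0, γ' + aβ² = 0, δ' + (c + 4aα)δ = f + 2αg, ε' = (g − 2aδ)β, κ' = gδ − aδ² on J. Let A : J → ℂ be differentiable with A(t) ≠ 0 and A'(t) = −(2a(t)α(t) + d(t))·A(t) for all t ∈ J. Fix y ∈ ℝ and set S(x, y, t) = α(t)x² + β(t)xy + γ(t)y² + δ(t)x + ε(t)y + κ(t) and ψ(x, t) = A(t)·exp(i·S(x, y, t)). Then ψ satisfies the linear Schrödinger equation i·∂ψ/∂t = −a(t)·∂²ψ/∂x² + b(t)x²ψ − i(c(t)x·∂ψ/∂x + d(t)ψ) − f(t)xψ + i·g(t)·∂ψ/∂x for all x ∈ ℝ and t ∈ J. -/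
/-- If the phase coefficients `α, β, γ, δ, ε, κ` solve the ODE system and the
amplitude `A` satisfies `A' = −(2aα + d)A`, then for each fixed `y` the function
`ψ(x,t) = A(t)·e^{iS(x,y,t)}` solves the linear Schrödinger equation
`i·∂ψ/∂t = −a ∂²ψ/∂x² + b x² ψ − i(c x ∂ψ/∂x + d ψ) − f x ψ + i g ∂ψ/∂x`. -/
theorem quadratic_ansatz_solves_schrodinger
    (a b c d f g : ℝ → ℝ) (J : Set ℝ) (hJopen : IsOpen J) (hJconn : J.OrdConnected)
    (α β γ δ ε κ : ℝ → ℝ)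
    (hα : ∀ t ∈ J, DifferentiableAt ℝ α t) (hβ : ∀ t ∈ J, DifferentiableAt ℝ β t)
    (hγ : ∀ t ∈ J, DifferentiableAt ℝ γ t) (hδ : ∀ t ∈ J, DifferentiableAt ℝ δ t)
    (hε : ∀ t ∈ J, DifferentiableAt ℝ ε t) (hκ : ∀ t ∈ J, DifferentiableAt ℝ κ t)
    (hsys : ∀ t ∈ J,
      deriv α t + b t + 2 * c t * α t + 4 * a t * α t ^ 2 = 0 ∧
      deriv β t + (c t + 4 * a t * α t) * β t = 0 ∧
      deriv γ t + a t * β t ^ 2 = 0 ∧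
      deriv δ t + (c t + 4 * a t * α t) * δ t = f t + 2 * α t * g t ∧
      deriv ε t = (g t - 2 * a t * δ t) * β t ∧
      deriv κ t = g t * δ t - a t * δ t ^ 2)
    (A : ℝ → ℂ) (hA0 : ∀ t ∈ J, A t ≠ 0)
    (hA1 : ∀ t ∈ J, DifferentiableAt ℝ A t)
    (hA2 : ∀ t ∈ J, deriv A t = -(((2 * a t * α t + d t : ℝ)) : ℂ) * A t)
    (y : ℝ)
    (S : ℝ → ℝ → ℝ)
    (hS : S = fun x t =>
      α t * x ^ 2 + β t * (x * y) + γ t * y ^ 2 + δ t * x + ε t * y + κ t)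
    (ψ : ℝ → ℝ → ℂ)
    (hψ : ψ = fun x t => A t * Complex.exp (Complex.I * ((S x t : ℝ) : ℂ))) :
    ∀ x : ℝ, ∀ t ∈ J,
      Complex.I * deriv (fun t' => ψ x t') t =
        -((a t : ℝ) : ℂ) * deriv (deriv fun x' => ψ x' t) x +
          ((b t : ℝ) : ℂ) * ((x : ℂ)) ^ 2 * ψ x t -
          Complex.I * (((c t : ℝ) : ℂ) * (x : ℂ) * deriv (fun x' => ψ x' t) x +
            ((d t : ℝ) : ℂ) * ψ x t) -
          ((f t : ℝ) : ℂ) * (x : ℂ) * ψ x t +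
          Complex.I * ((g t : ℝ) : ℂ) * deriv (fun x' => ψ x' t) x := by
  subst hS hψ
  intro x t ht
  obtain ⟨e1, e2, e3, e4, e5, e6⟩ := hsys t ht
  -- time derivative of the phase
  have hSt : HasDerivAt (fun t' => α t' * x ^ 2 + β t' * (x * y) + γ t' * y ^ 2 +
      δ t' * x + ε t' * y + κ t')
      (deriv α t * x ^ 2 + deriv β t * (x * y) + deriv γ t * y ^ 2 +
        deriv δ t * x + deriv ε t * y + deriv κ t) t :=
    ((((((hα t ht).hasDerivAt.mul_const _).add
        ((hβ t ht).hasDerivAt.mul_const _)).add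
        ((hγ t ht).hasDerivAt.mul_const _)).add
        ((hδ t ht).hasDerivAt.mul_const _)).add
        ((hε t ht).hasDerivAt.mul_const _)).add (hκ t ht).hasDerivAt
  set Sxt : ℝ := α t * x ^ 2 + β t * (x * y) + γ t * y ^ 2 + δ t * x + ε t * y + κ t with hSxt
  set E : ℂ := Complex.exp (Complex.I * (Sxt : ℂ)) with hE
  set St : ℝ := deriv α t * x ^ 2 + deriv β t * (x * y) + deriv γ t * y ^ 2 +
        deriv δ t * x + deriv ε t * y + deriv κ t with hStdef
  have hEexp : HasDerivAt (fun t' => Complex.exp (Complex.I *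
      ((α t' * x ^ 2 + β t' * (x * y) + γ t' * y ^ 2 + δ t' * x + ε t' * y + κ t' : ℝ) : ℂ)))
      (E * (Complex.I * (St : ℂ))) t :=
    (hSt.ofReal_comp.const_mul Complex.I).cexp
  have hψt : HasDerivAt (fun t' => A t' * Complex.exp (Complex.I *
      ((α t' * x ^ 2 + β t' * (x * y) + γ t' * y ^ 2 + δ t' * x + ε t' * y + κ t' : ℝ) : ℂ)))
      (deriv A t * E + A t * (E * (Complex.I * (St : ℂ)))) t :=
    (hA1 t ht).hasDerivAt.mul hEexp
  -- spatial derivatives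
  have hq : ∀ x' : ℝ, HasDerivAt (fun x'' => α t * x'' ^ 2 + β t * (x'' * y) + γ t * y ^ 2 +
      δ t * x'' + ε t * y + κ t) (2 * α t * x' + β t * y + δ t) x' := by
    intro x'
    have h1 : HasDerivAt (fun x'' : ℝ => α t * x'' ^ 2) (α t * (2 * x')) x' := by
      simpa using (hasDerivAt_pow 2 x').const_mul (α t)
    have h2 : HasDerivAt (fun x'' : ℝ => β t * (x'' * y)) (β t * y) x' := by
      simpa using ((hasDerivAt_id x').mul_const y).const_mul (β t)
    have h4 : HasDerivAt (fun x'' : ℝ => δ t * x'') (δ t) x' := by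
      simpa using (hasDerivAt_id x').const_mul (δ t)
    have := ((((h1.add h2).add (hasDerivAt_const x' (γ t * y ^ 2))).add h4).add
        (hasDerivAt_const x' (ε t * y))).add (hasDerivAt_const x' (κ t))
    refine this.congr_deriv ?_
    ring
  have hDx : ∀ x' : ℝ, HasDerivAt (fun x'' => A t * Complex.exp (Complex.I *
      ((α t * x'' ^ 2 + β t * (x'' * y) + γ t * y ^ 2 + δ t * x'' + ε t * y + κ t : ℝ) : ℂ)))
      (A t * (Complex.exp (Complex.I * ((α t * x' ^ 2 + β t * (x' * y) + γ t * y ^ 2 +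
        δ t * x' + ε t * y + κ t : ℝ) : ℂ)) *
        (Complex.I * ((2 * α t * x' + β t * y + δ t : ℝ) : ℂ)))) x' :=
    fun x' => (((hq x').ofReal_comp.const_mul Complex.I).cexp).const_mul (A t)
  have hd1 : (deriv fun x' => A t * Complex.exp (Complex.I *
      ((α t * x' ^ 2 + β t * (x' * y) + γ t * y ^ 2 + δ t * x' + ε t * y + κ t : ℝ) : ℂ))) =
      fun x' => A t * (Complex.exp (Complex.I * ((α t * x' ^ 2 + β t * (x' * y) + γ t * y ^ 2 +
        δ t * x' + ε t * y + κ t : ℝ) : ℂ)) *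
        (Complex.I * ((2 * α t * x' + β t * y + δ t : ℝ) : ℂ))) :=
    funext fun x' => (hDx x').deriv
  -- second spatial derivative
  have hlin : HasDerivAt (fun x' : ℝ => 2 * α t * x' + β t * y + δ t) (2 * α t) x := by
    have h := (((hasDerivAt_id x).const_mul (2 * α t)).add_const (β t * y + δ t))
    simpa [add_assoc] using h
  have hD2 : HasDerivAt (fun x' => A t * (Complex.exp (Complex.I *
      ((α t * x' ^ 2 + β t * (x' * y) + γ t * y ^ 2 + δ t * x' + ε t * y + κ t : ℝ) : ℂ)) *
        (Complex.I * ((2 * α t * x' + β t * y + δ t : ℝ) : ℂ))))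
      (A t * ((E * (Complex.I * ((2 * α t * x + β t * y + δ t : ℝ) : ℂ))) *
          (Complex.I * ((2 * α t * x + β t * y + δ t : ℝ) : ℂ)) +
        E * (Complex.I * ((2 * α t : ℝ) : ℂ)))) x :=
    ((((hq x).ofReal_comp.const_mul Complex.I).cexp.mul
      (hlin.ofReal_comp.const_mul Complex.I)).const_mul (A t))
  have key := hψt.deriv
  have key1 := (hDx x).deriv
  rw [← hSxt, ← hE] at key1
  have key2 : deriv (deriv fun x' => A t * Complex.exp (Complex.I *
      ((α t * x' ^ 2 + β t * (x' * y) + γ t * y ^ 2 + δ t * x' + ε t * y + κ t : ℝ) : ℂ))) x =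
      A t * ((E * (Complex.I * ((2 * α t * x + β t * y + δ t : ℝ) : ℂ))) *
          (Complex.I * ((2 * α t * x + β t * y + δ t : ℝ) : ℂ)) +
        E * (Complex.I * ((2 * α t : ℝ) : ℂ))) := by
    rw [hd1]; exact hD2.deriv
  show Complex.I * deriv (fun t' => A t' * Complex.exp (Complex.I *
      ((α t' * x ^ 2 + β t' * (x * y) + γ t' * y ^ 2 + δ t' * x + ε t' * y + κ t' : ℝ) : ℂ))) t =
    -((a t : ℝ) : ℂ) * deriv (deriv fun x' => A t * Complex.exp (Complex.I *
      ((α t * x' ^ 2 + β t * (x' * y) + γ t * y ^ 2 + δ t * x' + ε t * y + κ t : ℝ) : ℂ))) x +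
      ((b t : ℝ) : ℂ) * (x : ℂ) ^ 2 * (A t * E) -
      Complex.I * (((c t : ℝ) : ℂ) * (x : ℂ) * deriv (fun x' => A t * Complex.exp (Complex.I *
        ((α t * x' ^ 2 + β t * (x' * y) + γ t * y ^ 2 + δ t * x' + ε t * y + κ t : ℝ) : ℂ))) x +
        ((d t : ℝ) : ℂ) * (A t * E)) -
      ((f t : ℝ) : ℂ) * (x : ℂ) * (A t * E) +
      Complex.I * ((g t : ℝ) : ℂ) * deriv (fun x' => A t * Complex.exp (Complex.I *
        ((α t * x' ^ 2 + β t * (x' * y) + γ t * y ^ 2 + δ t * x' + ε t * y + κ t : ℝ) : ℂ))) x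
  rw [key, key1, key2, hA2 t ht]
  have rα : deriv α t = -(b t + 2 * c t * α t + 4 * a t * α t ^ 2) := by linarith
  have rβ : deriv β t = -((c t + 4 * a t * α t) * β t) := by linarith
  have rγ : deriv γ t = -(a t * β t ^ 2) := by linarith
  have rδ : deriv δ t = f t + 2 * α t * g t - (c t + 4 * a t * α t) * δ t := by linarith
  rw [hStdef, rα, rβ, rγ, rδ, e5, e6]
  push_cast
  ring_nf
  simp only [Complex.I_sq]
  ring
end

section
/- Let c, d : ℝ → ℝ be continuous, let s ∈ ℝ, and let μt, μs, αt, αs, βt, βs, γt, γs, δt, δs, εt, εs, κt, κs be real numbers with μt·μs·(γs − γt) ≠ 0. Define for x, y ∈ ℝ: G(x, y) = (4πi·μt·μs·(γs − γt))^{−1/2} · exp(−∫₀ˢ (c(τ) − 2d(τ)) dτ) · exp(i(αt·x² − αs·y² + δt·x − δs·y + κt − κs)) · exp((βt·x − βs·y + εt − εs)²/(4i(γt − γs))), where the outer square root is the principal branch. Then for every integrable function ψ : ℝ → ℂ and every x ∈ ℝ, |∫_ℝ G(x, y)·ψ(y) dy| ≤ (4π·|μt·μs·(γs − γt)|)^{−1/2}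 · exp(−∫₀ˢ (c(τ) − 2d(τ)) dτ) · ∫_ℝ |ψ(y)| dy; in particular the map ψ ↦ ∫_ℝ G(·, y)ψ(y) dy satisfies the L^∞–L¹ estimate ‖U(t,s)ψ‖_∞ ≤ (4π|μt·μs·(γs − γt)|)^{−1/2}·exp(−∫₀ˢ(c − 2d))·‖ψ‖₁. -/
open MeasureTheory intervalIntegral

/-- The `L^∞`–`L¹` estimate for the operator `U(t, s) = U(t)U(s)⁻¹` with composed
kernel `G(x, y) = G(x, y, t, s)`: for every integrable `ψ` and every `x`,
`|∫ G(x, y)ψ(y) dy| ≤ (4π|μt·μs·(γs − γt)|)^{−1/2}·exp(−∫₀ˢ(c − 2d))·‖ψ‖₁`. -/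
theorem composed_kernel_Linfty_L1_estimate
    (c d : ℝ → ℝ) (hc : Continuous c) (hd : Continuous d) (s : ℝ)
    (μt μs αt αs βt βs γt γs δt δs εt εs κt κs : ℝ)
    (hne : μt * μs * (γs - γt) ≠ 0)
    (G : ℝ → ℝ → ℂ)
    (hG : G = fun x y : ℝ =>
      (4 * (Real.pi : ℂ) * Complex.I * (μt : ℂ) * (μs : ℂ) *
          ((γs : ℂ) - (γt : ℂ))) ^ (-(1 : ℂ) / 2) *
        ((Real.exp (-∫ τ in (0:ℝ)..s, (c τ - 2 * d τ)) : ℝ) : ℂ) *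
        Complex.exp (Complex.I *
          ((αt * x ^ 2 - αs * y ^ 2 + δt * x - δs * y + κt - κs : ℝ) : ℂ)) *
        Complex.exp (((βt * x - βs * y + εt - εs : ℝ) : ℂ) ^ 2 /
          (4 * Complex.I * ((γt - γs : ℝ) : ℂ)))) :
    ∀ ψ : ℝ → ℂ, Integrable ψ volume → ∀ x : ℝ,
      ‖∫ y : ℝ, G x y * ψ y‖ ≤
        (4 * Real.pi * |μt * μs * (γs - γt)|) ^ (-(1 : ℝ) / 2) *
          Real.exp (-∫ τ in (0:ℝ)..s, (c τ - 2 * d τ)) *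
          ∫ y : ℝ, ‖ψ y‖ := by
  intro ψ hψ x
  set E := Real.exp (-∫ τ in (0:ℝ)..s, (c τ - 2 * d τ)) with hE
  set C := (4 * Real.pi * |μt * μs * (γs - γt)|) ^ (-(1 : ℝ) / 2) * E with hC
  have hzne : (4 * (Real.pi : ℂ) * Complex.I * (μt : ℂ) * (μs : ℂ) *
      ((γs : ℂ) - (γt : ℂ))) ≠ 0 := by
    have h4 : (4 : ℂ) ≠ 0 := by norm_num
    have hpi : (Real.pi : ℂ) ≠ 0 := Complex.ofReal_ne_zero.mpr Real.pi_ne_zero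
    have hμt : (μt : ℂ) ≠ 0 := Complex.ofReal_ne_zero.mpr (by
      intro h; exact hne (by rw [h]; ring))
    have hμs : (μs : ℂ) ≠ 0 := Complex.ofReal_ne_zero.mpr (by
      intro h; exact hne (by rw [h]; ring))
    have hγ : ((γs : ℂ) - (γt : ℂ)) ≠ 0 := by
      rw [← Complex.ofReal_sub]
      exact Complex.ofReal_ne_zero.mpr (by
        intro h; exact hne (by rw [h]; ring))
    exact mul_ne_zero (mul_ne_zero (mul_ne_zero (mul_ne_zero
      (mul_ne_zero h4 hpi) Complex.I_ne_zero) hμt) hμs) hγ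
  have habsG : ∀ y : ℝ, ‖G x y‖ = C := by
    intro y
    rw [hG]
    simp only [norm_mul]
    have h1 : ‖(4 * (Real.pi : ℂ) * Complex.I * (μt : ℂ) * (μs : ℂ) *
        ((γs : ℂ) - (γt : ℂ))) ^ (-(1 : ℂ) / 2)‖ =
        (4 * Real.pi * |μt * μs * (γs - γt)|) ^ (-(1 : ℝ) / 2) := by
      rw [Complex.norm_cpow_of_ne_zero hzne]
      have : ‖4 * (Real.pi : ℂ) * Complex.I * (μt : ℂ) * (μs : ℂ) *
          ((γs : ℂ) - (γt : ℂ))‖ = 4 * Real.pi * |μt * μs * (γs - γt)| := by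
        simp only [norm_mul, Complex.norm_I, ← Complex.ofReal_sub,
          Complex.norm_real, Real.norm_eq_abs, Complex.norm_ofNat]
        rw [abs_mul, abs_mul]
        rw [abs_of_pos Real.pi_pos]
        ring
      rw [this]
      norm_num
    have h2 : ‖((Real.exp (-∫ τ in (0:ℝ)..s, (c τ - 2 * d τ)) : ℝ) : ℂ)‖ = E := by
      rw [Complex.norm_real, Real.norm_eq_abs, abs_of_pos (Real.exp_pos _)]
    have h3 : ‖Complex.exp (Complex.I *
        ((αt * x ^ 2 - αs * y ^ 2 + δt * x - δs * y + κt - κs : ℝ) : ℂ))‖ = 1 := by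
      rw [Complex.norm_exp, Complex.mul_re]
      simp [sq, Complex.mul_im]
    have h4 : ‖Complex.exp (((βt * x - βs * y + εt - εs : ℝ) : ℂ) ^ 2 /
        (4 * Complex.I * ((γt - γs : ℝ) : ℂ)))‖ = 1 := by
      rw [Complex.norm_exp]
      have : (((βt * x - βs * y + εt - εs : ℝ) : ℂ) ^ 2 /
          (4 * Complex.I * ((γt - γs : ℝ) : ℂ))).re = 0 := by
        rw [Complex.div_re]
        simp [Complex.mul_re, Complex.mul_im]
        left; rw [sq, Complex.mul_im]; simp
      rw [this, Real.exp_zero]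
    rw [h1, h2, h3, h4, hC]
    ring
  calc ‖∫ y : ℝ, G x y * ψ y‖
      ≤ ∫ y : ℝ, ‖G x y * ψ y‖ := by
        simpa using norm_integral_le_integral_norm (fun y => G x y * ψ y)
    _ ≤ ∫ y : ℝ, C * ‖ψ y‖ := by
        apply integral_mono_of_nonneg
        · filter_upwards with y using (by positivity)
        · exact (hψ.norm.const_mul C)
        · filter_upwards with y
          rw [norm_mul, habsG y]
    _ = C * ∫ y : ℝ, ‖ψ y‖ := by rw [MeasureTheory.integral_const_mul]
    _ = _ := by rw [hC]
end

section
/- Let a, c, d : ℝ → ℝ with a continuous, a(0) ≠ 0. Let μ : ℝ → ℝ be differentiable with μ(0) = 0 and μ'(0) = 2a(0), let χ : ℝ → ℝ be continuous, and let γ be differentiable on an interval J (with μ(t) ≠ 0 on J) satisfying γ'(t) + exp(−2∫₀ᵗ (c(τ) − 2d(τ)) dτ)·a(t)/μ(t)² = 0 on J. If the addition property μ(t)·μ(s)·(γ(s) − γ(t)) = χ((t + s)/2)·μ(t − s) holds for all t, s in J (with t ≠ s), then necessarily χ(t) = (1/2)·exp(−2∫₀ᵗ (c(τ) − 2d(τ))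 dτ)·a(t)/a(0) for all t ∈ J. -/
open MeasureTheory intervalIntegral

/-- If the addition property `μ(t)μ(s)(γ(s) − γ(t)) = χ((t+s)/2)·μ(t − s)` holds on
an interval `J`, where `μ(0) = 0`, `μ'(0) = 2a(0) ≠ 0` and
`γ' + exp(−2∫₀ᵗ(c − 2d))·a/μ² = 0`, then necessarily
`χ(t) = (1/2)·exp(−2∫₀ᵗ(c − 2d))·a(t)/a(0)` on `J`. -/
theorem addition_property_determines_chi
    (a c d : ℝ → ℝ) (ha : Continuous a) (ha0 : a 0 ≠ 0)
    (μ : ℝ → ℝ) (hμdiff : Differentiable ℝ μ)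
    (hμ0 : μ 0 = 0) (hμ'0 : deriv μ 0 = 2 * a 0)
    (χ : ℝ → ℝ) (hχ : Continuous χ)
    (J : Set ℝ) (hJopen : IsOpen J) (hJconn : J.OrdConnected)
    (hμne : ∀ t ∈ J, μ t ≠ 0)
    (γ : ℝ → ℝ) (hγdiff : ∀ t ∈ J, DifferentiableAt ℝ γ t)
    (hγ : ∀ t ∈ J,
      deriv γ t +
        Real.exp (-2 * ∫ τ in (0:ℝ)..t, (c τ - 2 * d τ)) * a t / μ t ^ 2 = 0)
    (hadd : ∀ t ∈ J, ∀ s ∈ J, t ≠ s →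
      μ t * μ s * (γ s - γ t) = χ ((t + s) / 2) * μ (t - s)) :
    ∀ t ∈ J, χ t =
      1 / 2 * Real.exp (-2 * ∫ τ in (0:ℝ)..t, (c τ - 2 * d τ)) * a t / a 0 := by
  intro t ht
  set E := Real.exp (-2 * ∫ τ in (0:ℝ)..t, (c τ - 2 * d τ)) with hE
  have hμt := hμne t ht
  have hγ't : deriv γ t = -E * a t / μ t ^ 2 := by
    have h := hγ t ht
    rw [← hE] at h
    linear_combination h
  -- limit of LHS
  have hγder : HasDerivAt γ (deriv γ t) t := (hγdiff t ht).hasDerivAt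
  have h1 : Filter.Tendsto (fun s => μ t * μ s * slope γ t s) (nhdsWithin t {t}ᶜ)
      (nhds (μ t * μ t * deriv γ t)) := by
    have hs := hasDerivAt_iff_tendsto_slope.mp hγder
    have hμc : Filter.Tendsto μ (nhdsWithin t {t}ᶜ) (nhds (μ t)) :=
      (hμdiff.continuous.tendsto t).mono_left nhdsWithin_le_nhds
    exact ((hμc.const_mul (μ t)).mul hs)
  -- limit of RHS
  have hμ0der : HasDerivAt μ (2 * a 0) 0 := by
    rw [← hμ'0]; exact (hμdiff 0).hasDerivAt
  have hsl0 : Filter.Tendsto (slope μ 0) (nhdsWithin 0 {(0:ℝ)}ᶜ) (nhds (2 * a 0)) :=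
    hasDerivAt_iff_tendsto_slope.mp hμ0der
  have hmap : Filter.Tendsto (fun s => t - s) (nhdsWithin t {t}ᶜ)
      (nhdsWithin 0 {(0:ℝ)}ᶜ) := by
    rw [tendsto_nhdsWithin_iff]
    constructor
    · have h : Filter.Tendsto (fun s => t - s) (nhds t) (nhds (t - t)) :=
        (continuous_const.sub continuous_id).tendsto t
      simpa using h.mono_left nhdsWithin_le_nhds
    · filter_upwards [self_mem_nhdsWithin] with s hs
      simp only [Set.mem_compl_iff, Set.mem_singleton_iff] at hs ⊢
      intro h; apply hs; linarith
  have h2 : Filter.Tendsto (fun s => -(χ ((t + s) / 2) * (μ (t - s) / (t - s))))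
      (nhdsWithin t {t}ᶜ) (nhds (-(χ t * (2 * a 0)))) := by
    have hχt : Filter.Tendsto (fun s => χ ((t + s) / 2)) (nhdsWithin t {t}ᶜ)
        (nhds (χ t)) := by
      have hmid : Filter.Tendsto (fun s : ℝ => (t + s) / 2) (nhds t) (nhds t) := by
        have hc : Continuous (fun s : ℝ => (t + s) / 2) := by continuity
        have h := hc.tendsto t
        simpa using h
      exact ((hχ.tendsto t).comp hmid).mono_left nhdsWithin_le_nhds
    have hμsl : Filter.Tendsto (fun s => μ (t - s) / (t - s)) (nhdsWithin t {t}ᶜ)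
        (nhds (2 * a 0)) := by
      have h := hsl0.comp hmap
      simpa [Function.comp_def, slope_def_field, hμ0] using h
    exact (hχt.mul hμsl).neg
  -- eventual equality of the two functions
  have heq : ∀ᶠ s in nhdsWithin t {t}ᶜ, μ t * μ s * slope γ t s
      = -(χ ((t + s) / 2) * (μ (t - s) / (t - s))) := by
    filter_upwards [mem_nhdsWithin_of_mem_nhds (hJopen.mem_nhds ht),
      self_mem_nhdsWithin] with s hsJ hsne
    simp only [Set.mem_compl_iff, Set.mem_singleton_iff] at hsne
    have hA := hadd t ht s hsJ (Ne.symm hsne)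
    have hs0 : s - t ≠ 0 := sub_ne_zero.mpr hsne
    have hts : t - s ≠ 0 := sub_ne_zero.mpr (Ne.symm hsne)
    rw [slope_def_field]
    field_simp
    linear_combination (t - s) * hA
  have hlim : μ t * μ t * deriv γ t = -(χ t * (2 * a 0)) :=
    tendsto_nhds_unique (h1.congr' heq) h2
  rw [hγ't] at hlim
  field_simp at hlim
  have hp : μ t ^ 2 ≠ 0 := pow_ne_zero 2 hμt
  have h3 : E * a t = χ t * (2 * a 0) :=
    mul_right_cancel₀ hp (by linear_combination (-μ t ^ 2) * hlim)
  field_simp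
  linear_combination -h3
end
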